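/- For base b > 1 and integer length ℓ ≥ 1, the sum over k ≥ 1 of the cache-miss probabilities κ(b^k, ℓ), where κ(N, ℓ) = ℓ/N if ℓ ≤ N and 1 otherwise, equals ⌊log_b ℓ⌋ + ℓ · b^{-⌊log_b ℓ⌋} / (b - 1). -/
import Mathlib


/-- For integer base b ≥ 2 and integer length ℓ ≥ 1, with
κ(N, ℓ) = min(ℓ/N, 1), the sum over k ≥ 1 of κ(b^k, ℓ) equals
⌊log_b ℓ⌋ + ℓ · b^{-⌊log_b ℓ⌋} / (b - 1). -/
theorem sum_cache_miss_prob (b ℓ : ℕ) (hb : 2 ≤ b) (hl : 1 ≤ ℓ) :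
    ∑' k : ℕ, min ((ℓ : ℝ) / (b : ℝ) ^ (k + 1)) 1
      = (Nat.log b ℓ : ℝ) + (ℓ : ℝ) * ((b : ℝ) ^ (Nat.log b ℓ))⁻¹ / ((b : ℝ) - 1) := by
  set m := Nat.log b ℓ with hm
  have hbR : (1:ℝ) < (b:ℝ) := by exact_mod_cast hb
  have hbpos : (0:ℝ) < (b:ℝ) := by linarith
  have hlpos : (0:ℝ) < (ℓ:ℝ) := by exact_mod_cast hl
  have hinv0 : (0:ℝ) ≤ (b:ℝ)⁻¹ := by positivity
  have hinv1 : (b:ℝ)⁻¹ < 1 := by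
    rw [inv_lt_one_iff₀]; right; exact hbR
  have key : ∀ k : ℕ, (ℓ:ℝ) / (b:ℝ)^(k+1) = (ℓ:ℝ) * (b:ℝ)⁻¹ * ((b:ℝ)⁻¹)^k := by
    intro k
    rw [div_eq_mul_inv, ← inv_pow, pow_succ]
    ring
  have hsum : Summable (fun k : ℕ => min ((ℓ : ℝ) / (b:ℝ)^(k+1)) 1) := by
    apply Summable.of_nonneg_of_le (fun k => le_min (by positivity) zero_le_one)
      (fun k => (min_le_left _ _).trans_eq (key k))
    exact (summable_geometric_of_lt_one hinv0 hinv1).mul_left _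
  rw [← Summable.sum_add_tsum_nat_add m hsum]
  have h1 : ∑ i ∈ Finset.range m, min ((ℓ:ℝ) / (b:ℝ)^(i+1)) 1 = m := by
    rw [Finset.sum_congr rfl (fun i hi => ?_), Finset.sum_const, Finset.card_range,
      nsmul_eq_mul, mul_one]
    have hle : (b:ℕ)^(i+1) ≤ ℓ := by
      calc b^(i+1) ≤ b^m := Nat.pow_le_pow_right (by omega) (Finset.mem_range.mp hi)
        _ ≤ ℓ := Nat.pow_log_le_self b (by omega)
    have hleR : (b:ℝ)^(i+1) ≤ (ℓ:ℝ) := by exact_mod_cast hle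
    rw [min_eq_right]
    rw [le_div_iff₀ (by positivity), one_mul]
    exact hleR
  have h2 : ∀ i : ℕ, min ((ℓ:ℝ) / (b:ℝ)^(i+m+1)) 1
      = ((ℓ:ℝ) / (b:ℝ)^(m+1)) * ((b:ℝ)⁻¹)^i := by
    intro i
    have hlt : (ℓ:ℕ) < b^(i+m+1) := by
      calc ℓ < b^(m+1) := Nat.lt_pow_succ_log_self (by omega) ℓ
        _ ≤ b^(i+m+1) := Nat.pow_le_pow_right (by omega) (by omega)
    have hltR : (ℓ:ℝ) < (b:ℝ)^(i+m+1) := by exact_mod_cast hlt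
    rw [min_eq_left (le_of_lt (by rw [div_lt_one (by positivity)]; exact hltR))]
    rw [inv_pow, ← div_eq_mul_inv, div_div, ← pow_add,
      show m + 1 + i = i + m + 1 from by omega]
  rw [h1, tsum_congr h2,
    tsum_mul_left, tsum_geometric_of_lt_one hinv0 hinv1]
  have : (ℓ:ℝ) / (b:ℝ)^(m+1) * (1 - (b:ℝ)⁻¹)⁻¹ = (ℓ : ℝ) * ((b : ℝ) ^ m)⁻¹ / ((b : ℝ) - 1) := by
    have hb0 : (b:ℝ) ≠ 0 := ne_of_gt hbpos
    have hbm : (b:ℝ)^m ≠ 0 := pow_ne_zero _ hb0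
    have hb1 : (b:ℝ) - 1 ≠ 0 := by intro h; nlinarith
    have h1b : (1 : ℝ) - (b:ℝ)⁻¹ ≠ 0 := by
      intro h
      have : (b:ℝ)⁻¹ = 1 := by linarith
      have : (b:ℝ) = 1 := by
        field_simp at this; linarith
      linarith
    field_simp
    ring
  rw [this]
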